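/- If H(q) is the unique formal power series with H(0)=0 satisfying H = q + qH + qH^2 (half-pyramids of dimers by dimer count), then H(q) = (1 - q - sqrt((1+q)(1-3q)))/(2q), and its coefficients are the Motzkin numbers shifted: [q^{n+1}]H = M_n, the n-th Motzkin number. -/

import Mathlib

/-- The Motzkin numbers: `M₀ = 1`, `M_{n+1} = M_n + Σ_{k=0}^{n-1} M_k M_{n-1-k}`. -/
def motzkin : ℕ → ℕ
  | 0 => 1
  | n + 1 => motzkin n + ∑ k ∈ (Finset.range n).attach,
      motzkin k.1 * motzkin (n - 1 - k.1)
decreasing_by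
  · exact Nat.lt_succ_self n
  · have := Finset.mem_range.mp k.2; omega
  · omega

theorem motzkin_succ (n : ℕ) :
    motzkin (n + 1) = motzkin n + ∑ k ∈ Finset.range n, motzkin k * motzkin (n - 1 - k) := by
  rw [motzkin]
  congr 1
  exact Finset.sum_attach (Finset.range n) fun k => motzkin k * motzkin (n - 1 - k)

open PowerSeries in
/-- If `H` is the unique formal power series with `H(0) = 0` satisfying
`H = q + qH + qH²` (half-pyramids of dimers counted by dimers), then
`H(q) = (1 - q - √((1+q)(1-3q)))/(2q)`, i.e. `(1 - q - 2qH)² = (1+q)(1-3q)`,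
and its coefficients are the shifted Motzkin numbers: `[q^{n+1}]H = Mₙ`. -/
theorem halfpyramids_motzkin (H : PowerSeries ℚ)
    (h0 : PowerSeries.constantCoeff H = 0)
    (heq : H = X + X * H + X * H ^ 2) :
    (1 - X - 2 * X * H) ^ 2 = (1 + X) * (1 - 3 * X) ∧
    ∀ n : ℕ, PowerSeries.coeff (n + 1) H = motzkin n := by
  constructor
  · linear_combination (-4 * (X : PowerSeries ℚ)) * heq
  · intro n
    induction n using Nat.strong_induction_on with
    | _ n ih =>
      have hc0 : PowerSeries.coeff 0 H = 0 := by
        rwa [PowerSeries.coeff_zero_eq_constantCoeff]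
      match n with
      | 0 =>
        have h := congrArg (PowerSeries.coeff 1) heq
        rw [map_add, map_add, PowerSeries.coeff_succ_X_mul, PowerSeries.coeff_succ_X_mul,
          PowerSeries.coeff_one_X] at h
        rw [h, hc0, pow_two, PowerSeries.coeff_zero_eq_constantCoeff, map_mul, h0]
        simp [motzkin]
      | m + 1 =>
        have h := congrArg (PowerSeries.coeff (m + 2)) heq
        rw [map_add, map_add, PowerSeries.coeff_succ_X_mul, PowerSeries.coeff_succ_X_mul,
          PowerSeries.coeff_X] at h
        have hsq : PowerSeries.coeff (m + 1) (H ^ 2)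
            = ∑ j ∈ Finset.range (m + 2),
              PowerSeries.coeff j H * PowerSeries.coeff (m + 1 - j) H := by
          rw [pow_two, PowerSeries.coeff_mul,
            Finset.Nat.sum_antidiagonal_eq_sum_range_succ_mk]
        rw [Finset.sum_range_succ', hc0] at hsq
        simp only [mul_zero, zero_mul, add_zero] at hsq
        rw [Finset.sum_range_succ, Nat.sub_self, hc0, mul_zero, add_zero] at hsq
        have hsum : ∑ k ∈ Finset.range m,
            PowerSeries.coeff (k + 1) H * PowerSeries.coeff (m + 1 - (k + 1)) H
            = ∑ k ∈ Finset.range m, ((motzkin k : ℚ) * (motzkin (m - 1 - k) : ℚ)) := by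
          apply Finset.sum_congr rfl
          intro k hk
          have hk' := Finset.mem_range.mp hk
          rw [ih k (by omega), show m + 1 - (k + 1) = (m - 1 - k) + 1 by omega,
            ih (m - 1 - k) (by omega)]
        rw [h, hsq, hsum, ih m (Nat.lt_succ_self m), motzkin_succ]
        push_cast
        simp
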